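/- Let S, S̄ ∈ ℝ^{n×m} with rank(S̄) ≤ r, let S̃ be the best rank-r approximation of S, and suppose ‖S − S̄‖ ≤ ε (spectral norm). Then for any threshold τ > 0, the number of rows u such that ‖S̃_u − S̄_u‖₂ > τ/2 is at most 32 r ε² / τ². -/

import Mathlib

/-- Euclidean norm of a vector. -/
noncomputable def enorm2 {k : ℕ} (x : Fin k → ℝ) : ℝ := Real.sqrt (∑ i, x i ^ 2)

/-- Spectral norm of a matrix: supremum of `‖X v‖₂` over Euclidean unit-ball vectors `v`. -/
noncomputable def specNorm {n m : ℕ} (X : Matrix (Fin n) (Fin m) ℝ) : ℝ :=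
  ⨆ v : {v : Fin m → ℝ // enorm2 v ≤ 1}, enorm2 (X.mulVec v.1)

lemma enorm2_eq_norm {k : ℕ} (x : Fin k → ℝ) :
    enorm2 x = ‖(WithLp.equiv 2 (Fin k → ℝ)).symm x‖ := by
  rw [EuclideanSpace.norm_eq]; unfold enorm2; congr 1
  refine Finset.sum_congr rfl fun i _ => ?_
  rw [WithLp.equiv_symm_apply, WithLp.ofLp_toLp, Real.norm_eq_abs, sq_abs]

lemma specNorm_bdd {n m : ℕ} (X : Matrix (Fin n) (Fin m) ℝ) :
    BddAbove (Set.range fun v : {v : Fin m → ℝ // enorm2 v ≤ 1} => enorm2 (X.mulVec v.1)) := by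
  refine ⟨‖LinearMap.toContinuousLinearMap (Matrix.toEuclideanLin X)‖, ?_⟩
  rintro y ⟨v, rfl⟩
  have h := (LinearMap.toContinuousLinearMap (Matrix.toEuclideanLin X)).le_opNorm
    ((WithLp.equiv 2 (Fin m → ℝ)).symm v.1)
  simp only [LinearMap.coe_toContinuousLinearMap', WithLp.equiv_symm_apply, Matrix.toEuclideanLin_apply_piLp_toLp] at h
  show enorm2 (X.mulVec v.1) ≤ _
  rw [enorm2_eq_norm]
  calc ‖(WithLp.equiv 2 (Fin n → ℝ)).symm (X.mulVec v.1)‖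
      ≤ ‖LinearMap.toContinuousLinearMap (Matrix.toEuclideanLin X)‖ *
        ‖(WithLp.equiv 2 (Fin m → ℝ)).symm v.1‖ := h
    _ ≤ ‖LinearMap.toContinuousLinearMap (Matrix.toEuclideanLin X)‖ * 1 := by
        apply mul_le_mul_of_nonneg_left _ (norm_nonneg _)
        rw [← enorm2_eq_norm]; exact v.2
    _ = _ := mul_one _

lemma le_specNorm {n m : ℕ} (X : Matrix (Fin n) (Fin m) ℝ) {v : Fin m → ℝ}
    (hv : enorm2 v ≤ 1) : enorm2 (X.mulVec v) ≤ specNorm X :=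
  le_ciSup (specNorm_bdd X) ⟨v, hv⟩

lemma enorm2_zero {k : ℕ} : enorm2 (0 : Fin k → ℝ) = 0 := by simp [enorm2]

lemma specNorm_nonneg {n m : ℕ} (X : Matrix (Fin n) (Fin m) ℝ) : 0 ≤ specNorm X := by
  have := le_specNorm X (v := 0) (by rw [enorm2_zero]; norm_num)
  rwa [Matrix.mulVec_zero, enorm2_zero] at this

lemma enorm2_sq {k : ℕ} (x : Fin k → ℝ) : enorm2 x ^ 2 = ∑ i, x i ^ 2 :=
  Real.sq_sqrt (by positivity)

lemma enorm2_nonneg {k : ℕ} (x : Fin k → ℝ) : 0 ≤ enorm2 x := Real.sqrt_nonneg _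

lemma enorm2_neg {k : ℕ} (x : Fin k → ℝ) : enorm2 (-x) = enorm2 x := by simp [enorm2]

lemma specNorm_neg {n m : ℕ} (X : Matrix (Fin n) (Fin m) ℝ) : specNorm (-X) = specNorm X := by
  unfold specNorm
  congr 1; funext v
  rw [Matrix.neg_mulVec, enorm2_neg]

lemma enorm2_add_le {k : ℕ} (x y : Fin k → ℝ) : enorm2 (x + y) ≤ enorm2 x + enorm2 y := by
  simp only [enorm2_eq_norm]
  exact norm_add_le ((WithLp.equiv 2 (Fin k → ℝ)).symm x) ((WithLp.equiv 2 (Fin k → ℝ)).symm y)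

instance unitBallNonempty {m : ℕ} : Nonempty {v : Fin m → ℝ // enorm2 v ≤ 1} :=
  ⟨⟨0, by rw [enorm2_zero]; norm_num⟩⟩

lemma specNorm_add_le {n m : ℕ} (A B : Matrix (Fin n) (Fin m) ℝ) :
    specNorm (A + B) ≤ specNorm A + specNorm B := by
  apply ciSup_le
  rintro ⟨v, hv⟩
  calc enorm2 ((A + B).mulVec v) = enorm2 (A.mulVec v + B.mulVec v) := by
        rw [Matrix.add_mulVec]
    _ ≤ enorm2 (A.mulVec v) + enorm2 (B.mulVec v) := enorm2_add_le _ _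
    _ ≤ specNorm A + specNorm B := add_le_add (le_specNorm A hv) (le_specNorm B hv)

lemma rank_sub_le {n m : ℕ} (A B : Matrix (Fin n) (Fin m) ℝ) :
    (A - B).rank ≤ A.rank + B.rank := by
  rw [Matrix.rank, Matrix.rank, Matrix.rank]
  have h : LinearMap.range (A - B).mulVecLin ≤
      LinearMap.range A.mulVecLin ⊔ LinearMap.range B.mulVecLin := by
    rintro x ⟨v, rfl⟩
    have : (A - B).mulVecLin v = A.mulVecLin v - B.mulVecLin v := by
      simp [Matrix.mulVecLin_apply, Matrix.sub_mulVec]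
    rw [this]
    exact Submodule.sub_mem _ (Submodule.mem_sup_left ⟨v, rfl⟩)
      (Submodule.mem_sup_right ⟨v, rfl⟩)
  exact (Submodule.finrank_mono h).trans
    (Submodule.finrank_add_le_finrank_add_finrank _ _)

lemma frob_le {n m : ℕ} (M : Matrix (Fin n) (Fin m) ℝ) :
    ∑ u, enorm2 (M u) ^ 2 ≤ (M.rank : ℝ) * specNorm M ^ 2 := by
  classical
  set f : (Fin m → ℝ) ≃ₗ[ℝ] EuclideanSpace ℝ (Fin m) := (WithLp.linearEquiv 2 ℝ (Fin m → ℝ)).symm with hf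
  set W : Submodule ℝ (EuclideanSpace ℝ (Fin m)) :=
    Submodule.map (f : (Fin m → ℝ) →ₗ[ℝ] EuclideanSpace ℝ (Fin m)) (Submodule.span ℝ (Set.range M)) with hW
  have hfin : Module.finrank ℝ W = M.rank := by
    rw [hW]
    exact (LinearEquiv.finrank_map_eq f _).trans M.rank_eq_finrank_span_row.symm
  let b := stdOrthonormalBasis ℝ W
  have hmem : ∀ u, f (M u) ∈ W := fun u =>
    Submodule.mem_map_of_mem (Submodule.subset_span ⟨u, rfl⟩)
  -- vector corresponding to basis element j
  set v : Fin (Module.finrank ℝ W) → (Fin m → ℝ) :=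
    fun j => WithLp.equiv 2 (Fin m → ℝ) ((b j : EuclideanSpace ℝ (Fin m))) with hv
  have hvnorm : ∀ j, enorm2 (v j) = 1 := by
    intro j
    rw [enorm2_eq_norm, hv]
    simp only [Equiv.symm_apply_apply]
    rw [show ‖(b j : EuclideanSpace ℝ (Fin m))‖ = ‖b j‖ from rfl]
    exact b.orthonormal.1 j
  have hinner : ∀ u j, (M.mulVec (v j)) u = inner ℝ (b j : EuclideanSpace ℝ (Fin m)) (f (M u)) := by
    intro u j
    rw [Matrix.mulVec, dotProduct]
    rw [PiLp.inner_apply]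
    refine Finset.sum_congr rfl fun i _ => ?_
    rw [RCLike.inner_apply, conj_trivial]
    rfl
  have key : ∀ u, enorm2 (M u) ^ 2 = ∑ j, (M.mulVec (v j)) u ^ 2 := by
    intro u
    have h1 : enorm2 (M u) = ‖(⟨f (M u), hmem u⟩ : W)‖ := by
      rw [enorm2_eq_norm]; rfl
    rw [h1, ← b.repr.norm_map (⟨f (M u), hmem u⟩ : W), EuclideanSpace.norm_eq,
      Real.sq_sqrt (by positivity)]
    refine Finset.sum_congr rfl fun j _ => ?_
    rw [Real.norm_eq_abs, sq_abs, hinner]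
    rw [b.repr_apply_apply]
    rfl
  calc ∑ u, enorm2 (M u) ^ 2 = ∑ u, ∑ j, (M.mulVec (v j)) u ^ 2 := by
        exact Finset.sum_congr rfl fun u _ => key u
    _ = ∑ j, ∑ u, (M.mulVec (v j)) u ^ 2 := Finset.sum_comm
    _ = ∑ j, enorm2 (M.mulVec (v j)) ^ 2 := by
        refine Finset.sum_congr rfl fun j _ => ?_
        rw [enorm2_sq]
    _ ≤ ∑ j : Fin (Module.finrank ℝ W), specNorm M ^ 2 := by
        refine Finset.sum_le_sum fun j _ => ?_
        have := le_specNorm M (hvnorm j).le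
        exact pow_le_pow_left₀ (enorm2_nonneg _) this 2
    _ = (M.rank : ℝ) * specNorm M ^ 2 := by
        rw [Finset.sum_const, Finset.card_univ, Fintype.card_fin, hfin, nsmul_eq_mul]

theorem stmt16 (n m r : ℕ) (ε τ : ℝ) (hτ : 0 < τ)
    (S Sbar Stil : Matrix (Fin n) (Fin m) ℝ)
    (hSbar : Sbar.rank ≤ r)
    (hStil_rank : Stil.rank ≤ r)
    (hStil_best : ∀ X : Matrix (Fin n) (Fin m) ℝ, X.rank ≤ r →
      specNorm (Stil - S) ≤ specNorm (X - S))
    (hε : specNorm (S - Sbar) ≤ ε) :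
    ((Finset.univ.filter (fun u : Fin n => τ / 2 < enorm2 (Stil u - Sbar u))).card : ℝ)
      ≤ 32 * r * ε ^ 2 / τ ^ 2 := by
  have hε0 : 0 ≤ ε := (specNorm_nonneg _).trans hε
  have h1 : specNorm (Stil - S) ≤ ε := by
    refine (hStil_best Sbar hSbar).trans ?_
    rw [show Sbar - S = -(S - Sbar) by abel, specNorm_neg]
    exact hε
  have h2 : specNorm (Stil - Sbar) ≤ 2 * ε := by
    have := specNorm_add_le (Stil - S) (S - Sbar)
    rw [show Stil - S + (S - Sbar) = Stil - Sbar by abel] at this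
    linarith
  have hrank : ((Stil - Sbar).rank : ℝ) ≤ 2 * r := by
    have := rank_sub_le Stil Sbar
    have : (Stil - Sbar).rank ≤ 2 * r := this.trans (by omega)
    exact_mod_cast this
  have hfrob : ∑ u, enorm2 ((Stil - Sbar) u) ^ 2 ≤ 8 * r * ε ^ 2 := by
    refine (frob_le (Stil - Sbar)).trans ?_
    have hs0 : 0 ≤ specNorm (Stil - Sbar) := specNorm_nonneg _
    have hsq : specNorm (Stil - Sbar) ^ 2 ≤ (2 * ε) ^ 2 := by
      apply pow_le_pow_left₀ hs0 h2
    calc ((Stil - Sbar).rank : ℝ) * specNorm (Stil - Sbar) ^ 2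
        ≤ (2 * r) * (2 * ε) ^ 2 := by
          apply mul_le_mul hrank hsq (by positivity) (by positivity)
      _ = 8 * r * ε ^ 2 := by ring
  set T := Finset.univ.filter (fun u : Fin n => τ / 2 < enorm2 (Stil u - Sbar u)) with hT
  have hcount : (T.card : ℝ) * (τ / 2) ^ 2 ≤ 8 * r * ε ^ 2 := by
    have step : (T.card : ℝ) * (τ / 2) ^ 2 ≤ ∑ u ∈ T, enorm2 ((Stil - Sbar) u) ^ 2 := by
      have : (T.card : ℝ) * (τ / 2) ^ 2 = ∑ _u ∈ T, (τ / 2) ^ 2 := by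
        rw [Finset.sum_const, nsmul_eq_mul]
      rw [this]
      refine Finset.sum_le_sum fun u hu => ?_
      have hu' := (Finset.mem_filter.mp hu).2
      have : (Stil - Sbar) u = Stil u - Sbar u := rfl
      rw [this]
      exact pow_le_pow_left₀ (by positivity) hu'.le 2
    refine step.trans ?_
    refine (Finset.sum_le_sum_of_subset_of_nonneg (Finset.subset_univ T) ?_).trans hfrob
    intro u _ _
    positivity
  rw [le_div_iff₀ (by positivity : (0:ℝ) < τ ^ 2)]
  nlinarith [hcount]
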